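/- Conditional mutual information with a classical conditioning system equals the average of mutual informations: let n ≥ 1, let q be a probability distribution on Fin n, and for each λ ∈ Fin n let ρ^λ be a density matrix (Hermitian, positive semidefinite, trace 1) indexed by K×L. Define ρ_{KLE}, indexed by K×L×Fin n, by ρ_{KLE} := ∑_λ q(λ)·(ρ^λ ⊗ |λ⟩⟨λ|). Then I(K;L|E)_ρ = ∑_{λ : q(λ)>0} q(λ)·I(K;L)_{ρ^λ}, where I(K;L)_σ := H(σ_K) + H(σ_L) − H(σ_{KL}). In particular, if each ρ^λ is a product state ρ^λ = θ^λ ⊗ κ^λ (Kronecker product of density matrices on K and on L), then I(K;L|E)_ρ = 0. -/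

import Mathlib

open scoped BigOperators
open Matrix Kronecker
open scoped ComplexOrder

noncomputable section

/-- `φ(t) = -t·log₂ t`. -/
noncomputable def entPhi (t : ℝ) : ℝ := -(t * Real.logb 2 t)

/-- von Neumann entropy (in bits) of a Hermitian matrix, via its eigenvalues. -/
noncomputable def vnEntropy {n : Type*} [Fintype n] [DecidableEq n] (ρ : Matrix n n ℂ) : ℝ :=
  if h : ρ.IsHermitian then ∑ i, entPhi (h.eigenvalues i) else 0

/-- Partial trace over the second factor. -/
def ptrace2 {I J : Type*} [Fintype J] (ρ : Matrix (I × J) (I × J) ℂ) : Matrix I I ℂ :=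
  Matrix.of fun i i' => ∑ j, ρ (i, j) (i', j)

/-- Partial trace over the first factor. -/
def ptrace1 {I J : Type*} [Fintype I] (ρ : Matrix (I × J) (I × J) ℂ) : Matrix J J ℂ :=
  Matrix.of fun j j' => ∑ i, ρ (i, j) (i, j')

/-- Marginal on `K × M` of a state on `K × L × M`. -/
def margKM {K L M : Type*} [Fintype L] (σ : Matrix (K × L × M) (K × L × M) ℂ) :
    Matrix (K × M) (K × M) ℂ :=
  Matrix.of fun p q => ∑ l, σ (p.1, l, p.2) (q.1, l, q.2)

/-- Marginal on `L × M` of a state on `K × L × M`. -/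
def margLM {K L M : Type*} [Fintype K] (σ : Matrix (K × L × M) (K × L × M) ℂ) :
    Matrix (L × M) (L × M) ℂ :=
  Matrix.of fun p q => ∑ k, σ (k, p.1, p.2) (k, q.1, q.2)

/-- Marginal on `M` of a state on `K × L × M`. -/
def margM {K L M : Type*} [Fintype K] [Fintype L] (σ : Matrix (K × L × M) (K × L × M) ℂ) :
    Matrix M M ℂ :=
  Matrix.of fun m m' => ∑ k, ∑ l, σ (k, l, m) (k, l, m')

/-- Conditional mutual information `I(K;L|M)` of a state on `K × L × M`. -/
noncomputable def CMI {K L M : Type*} [Fintype K] [Fintype L] [Fintype M]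
    [DecidableEq K] [DecidableEq L] [DecidableEq M]
    (σ : Matrix (K × L × M) (K × L × M) ℂ) : ℝ :=
  vnEntropy (margKM σ) + vnEntropy (margLM σ) - vnEntropy σ - vnEntropy (margM σ)

def IsProbDist {X : Type*} [Fintype X] (p : X → ℝ) : Prop :=
  (∀ x, 0 ≤ p x) ∧ ∑ x, p x = 1

/-- An assemblage: PSD members, normalized for each input, and no-signaling. -/
def IsAssemblage {A X B : Type*} [Fintype A] [Fintype B]
    (ρ : A → X → Matrix B B ℂ) : Prop :=
  (∀ a x, (ρ a x).PosSemidef) ∧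
  (∀ x, ∑ a, (ρ a x).trace = 1) ∧
  (∀ x x' : X, ∑ a, ρ a x = ∑ a, ρ a x')

/-- Mutual information `I(K;L)` of a state on `K × L`. -/
noncomputable def MI {K L : Type*} [Fintype K] [Fintype L] [DecidableEq K] [DecidableEq L]
    (σ : Matrix (K × L) (K × L) ℂ) : ℝ :=
  vnEntropy (ptrace2 σ) + vnEntropy (ptrace1 σ) - vnEntropy σ


section AuxLemmas
open Polynomial
variable {m m' : Type*} [Fintype m] [DecidableEq m] [Fintype m'] [DecidableEq m']

lemma entPhi_mul (a b : ℝ) : entPhi (a * b) = a * entPhi b + b * entPhi a := by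
  unfold entPhi
  by_cases ha : a = 0
  · simp [ha]
  by_cases hb : b = 0
  · simp [hb]
  rw [Real.logb, Real.logb, Real.logb, Real.log_mul ha hb]
  ring

lemma charpoly_conj (U B V : Matrix m m ℂ) (hUV : U * V = 1) :
    (U * B * V).charpoly = B.charpoly := by
  have h1 : U.map (C : ℂ →+* ℂ[X]) * V.map (C : ℂ →+* ℂ[X]) = 1 := by
    rw [← Matrix.map_mul, hUV, Matrix.map_one _ (map_zero _) (map_one _)]
  have hscalar : U.map (C : ℂ →+* ℂ[X]) * Matrix.scalar m (X : ℂ[X]) * V.map (C : ℂ →+* ℂ[X])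
      = Matrix.scalar m (X : ℂ[X]) := by
    rw [(Matrix.scalar_commute (X : ℂ[X]) (fun r' => Commute.all _ _)
      (U.map (C : ℂ →+* ℂ[X]))).symm.eq, mul_assoc, h1, mul_one]
  have hcm : charmatrix (U * B * V)
      = U.map (C : ℂ →+* ℂ[X]) * charmatrix B * V.map (C : ℂ →+* ℂ[X]) := by
    unfold charmatrix
    rw [Matrix.mul_sub, Matrix.sub_mul, hscalar]
    congr 1
    simp [RingHom.mapMatrix_apply, Matrix.map_mul]
  have hd : (U.map (C : ℂ →+* ℂ[X])).det * (V.map (C : ℂ →+* ℂ[X])).det = 1 := by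
    rw [← det_mul, h1, det_one]
  rw [Matrix.charpoly, hcm, det_mul, det_mul, mul_comm ((U.map (C : ℂ →+* ℂ[X])).det) _,
    mul_assoc, hd, mul_one, Matrix.charpoly]

lemma charpoly_roots_diagonal (c : m → ℂ) :
    (Matrix.diagonal c).charpoly.roots = Finset.univ.val.map c := by
  have hcm : charmatrix (Matrix.diagonal c) = Matrix.diagonal (fun i => (X : ℂ[X]) - C (c i)) := by
    refine Matrix.ext fun i j => ?_
    by_cases h : i = j
    · subst h; rw [charmatrix_apply_eq, diagonal_apply_eq, diagonal_apply_eq]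
    · rw [charmatrix_apply_ne _ _ _ h, diagonal_apply_ne _ h, diagonal_apply_ne _ h, map_zero,
        neg_zero]
  rw [Matrix.charpoly, hcm, det_diagonal]
  have : ∏ i, ((X : ℂ[X]) - C (c i)) = ((Finset.univ.val.map c).map fun a => X - C a).prod := by
    rw [Multiset.map_map]; rfl
  rw [this, roots_multiset_prod_X_sub_C]

lemma sum_f_eigenvalues (A : Matrix m m ℂ) (hA : A.IsHermitian) (e : m' ≃ m)
    (U V : Matrix m' m' ℂ) (hUV : U * V = 1) (d : m' → ℝ)
    (hdec : A = (Matrix.reindex e e) (U * Matrix.diagonal (fun i => (d i : ℂ)) * V))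
    (f : ℝ → ℝ) :
    ∑ i, f (hA.eigenvalues i) = ∑ i, f (d i) := by
  have h1 : A.charpoly = (Matrix.diagonal (fun i => (d i : ℂ))).charpoly := by
    rw [hdec, Matrix.charpoly_reindex, charpoly_conj _ _ _ hUV]
  have hU0 : (hA.eigenvectorUnitary : Matrix m m ℂ) * star (hA.eigenvectorUnitary : Matrix m m ℂ)
      = 1 := (Matrix.mem_unitaryGroup_iff).mp hA.eigenvectorUnitary.2
  have h2 : A.charpoly
      = (Matrix.diagonal (fun i => ((hA.eigenvalues i : ℝ) : ℂ))).charpoly := by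
    conv_lhs => rw [hA.spectral_theorem]
    exact charpoly_conj _ _ _ hU0
  have hroots : Finset.univ.val.map (fun i => ((hA.eigenvalues i : ℝ) : ℂ))
      = Finset.univ.val.map (fun i => ((d i : ℝ) : ℂ)) := by
    rw [← charpoly_roots_diagonal, ← charpoly_roots_diagonal, ← h1, ← h2]
  have key := congrArg (fun s : Multiset ℂ => (s.map (fun z => f z.re)).sum) hroots
  simp only [Multiset.map_map, Function.comp, Complex.ofReal_re] at key
  rw [← Finset.sum_map_val, ← Finset.sum_map_val]
  exact key

lemma sum_eigenvalues_eq_one (A : Matrix m m ℂ) (hA : A.IsHermitian) (htr : A.trace = 1) :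
    ∑ i, hA.eigenvalues i = 1 := by
  have hU0 : star (hA.eigenvectorUnitary : Matrix m m ℂ) * (hA.eigenvectorUnitary : Matrix m m ℂ)
      = 1 := Matrix.UnitaryGroup.star_mul_self _
  have h : A.trace = ∑ i, ((hA.eigenvalues i : ℝ) : ℂ) := by
    conv_lhs => rw [hA.spectral_theorem]
    rw [Unitary.conjStarAlgAut_apply]
    rw [Matrix.trace_mul_cycle, hU0, one_mul, Matrix.trace_diagonal]
    rfl
  rw [htr] at h
  have := h.symm
  rw [← Complex.ofReal_sum] at this
  exact_mod_cast this

lemma vnEntropy_herm (A : Matrix m m ℂ) (hA : A.IsHermitian) :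
    vnEntropy A = ∑ i, entPhi (hA.eigenvalues i) := dif_pos hA

/-- entropy of a reindexed block-diagonal of weighted density matrices -/
lemma vnEntropy_reindex_blockDiagonal {o : Type*} [Fintype o] [DecidableEq o]
    {m2 : Type*} [Fintype m2] [DecidableEq m2]
    (A : Matrix m2 m2 ℂ) (e : (m × o) ≃ m2)
    (q : o → ℝ) (B : o → Matrix m m ℂ) (hB : ∀ k, (B k).IsHermitian)
    (htr : ∀ k, (B k).trace = 1)
    (hAeq : A = (Matrix.reindex e e) (Matrix.blockDiagonal fun k => (q k : ℂ) • B k)) :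
    vnEntropy A = ∑ k, (q k * vnEntropy (B k) + entPhi (q k)) := by
  set U : Matrix (m × o) (m × o) ℂ :=
    Matrix.blockDiagonal fun k => ((hB k).eigenvectorUnitary : Matrix m m ℂ) with hU
  set V : Matrix (m × o) (m × o) ℂ :=
    Matrix.blockDiagonal fun k => star ((hB k).eigenvectorUnitary : Matrix m m ℂ) with hV
  have hUV : U * V = 1 := by
    rw [hU, hV, ← Matrix.blockDiagonal_mul]
    have : (fun k => ((hB k).eigenvectorUnitary : Matrix m m ℂ)
        * star ((hB k).eigenvectorUnitary : Matrix m m ℂ)) = fun _ => (1 : Matrix m m ℂ) := by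
      funext k
      exact (Matrix.mem_unitaryGroup_iff).mp (hB k).eigenvectorUnitary.2
    rw [this]
    exact Matrix.blockDiagonal_one
  set d : m × o → ℝ := fun p => q p.2 * (hB p.2).eigenvalues p.1 with hd
  have hblock : ∀ k, ((hB k).eigenvectorUnitary : Matrix m m ℂ)
      * Matrix.diagonal (fun i => ((q k * (hB k).eigenvalues i : ℝ) : ℂ))
      * star ((hB k).eigenvectorUnitary : Matrix m m ℂ) = (q k : ℂ) • B k := by
    intro k
    have hdiag : Matrix.diagonal (fun i => ((q k * (hB k).eigenvalues i : ℝ) : ℂ))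
        = (q k : ℂ) • Matrix.diagonal (fun i => (((hB k).eigenvalues i : ℝ) : ℂ)) := by
      have hfun : (fun i => ((q k * (hB k).eigenvalues i : ℝ) : ℂ))
          = (q k : ℂ) • fun i => (((hB k).eigenvalues i : ℝ) : ℂ) := by
        funext i
        simp only [Pi.smul_apply, smul_eq_mul]
        push_cast
        ring
      rw [hfun, Matrix.diagonal_smul]
    rw [hdiag, Matrix.mul_smul, Matrix.smul_mul]
    congr 1
    exact ((hB k).spectral_theorem).symm
  have hdec : A = (Matrix.reindex e e) (U * Matrix.diagonal (fun p => ((d p : ℝ) : ℂ)) * V) := by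
    rw [hAeq]
    congr 1
    have hdd : Matrix.diagonal (fun p : m × o => ((d p : ℝ) : ℂ))
        = Matrix.blockDiagonal fun k =>
            Matrix.diagonal (fun i => ((q k * (hB k).eigenvalues i : ℝ) : ℂ)) := by
      rw [Matrix.blockDiagonal_diagonal]
    rw [hdd, hU, hV, ← Matrix.blockDiagonal_mul, ← Matrix.blockDiagonal_mul]
    exact congrArg Matrix.blockDiagonal (funext fun k => (hblock k).symm)
  have hAherm : A.IsHermitian := by
    rw [Matrix.IsHermitian, hAeq, Matrix.conjTranspose_reindex, Matrix.blockDiagonal_conjTranspose]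
    refine congrArg _ (congrArg Matrix.blockDiagonal (funext fun k => ?_))
    rw [Matrix.conjTranspose_smul, (hB k).eq]
    congr 1
    simp [Complex.star_def, Complex.conj_ofReal]
  rw [vnEntropy_herm A hAherm, sum_f_eigenvalues A hAherm e U V hUV d hdec entPhi]
  rw [Fintype.sum_prod_type_right]
  refine Finset.sum_congr rfl fun k _ => ?_
  have : ∀ i, entPhi (d (i, k)) = q k * entPhi ((hB k).eigenvalues i)
      + (hB k).eigenvalues i * entPhi (q k) := fun i => entPhi_mul _ _
  rw [Finset.sum_congr rfl fun i _ => this i, Finset.sum_add_distrib, ← Finset.mul_sum,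
    ← Finset.sum_mul, sum_eigenvalues_eq_one (B k) (hB k) (htr k), one_mul,
    vnEntropy_herm (B k) (hB k)]


lemma vnEntropy_diagonal_real (c : m → ℝ) :
    vnEntropy (Matrix.diagonal fun i => ((c i : ℝ) : ℂ)) = ∑ i, entPhi (c i) := by
  have hA : (Matrix.diagonal fun i => ((c i : ℝ) : ℂ)).IsHermitian := by
    rw [Matrix.IsHermitian, Matrix.diagonal_conjTranspose]
    refine congrArg Matrix.diagonal (funext fun i => ?_)
    simp [Complex.star_def, Complex.conj_ofReal]
  rw [vnEntropy_herm _ hA]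
  refine sum_f_eigenvalues _ hA (Equiv.refl m) 1 1 (one_mul 1) c ?_ entPhi
  rw [one_mul, Matrix.mul_one, Matrix.reindex_apply, Equiv.refl_symm, Equiv.coe_refl,
    Matrix.submatrix_id_id]

lemma ptrace2_isHermitian {I J : Type*} [Fintype I] [Fintype J]
    (A : Matrix (I × J) (I × J) ℂ) (hA : A.IsHermitian) : (ptrace2 A).IsHermitian := by
  refine Matrix.ext fun i i' => ?_
  rw [Matrix.conjTranspose_apply, ptrace2, Matrix.of_apply, Matrix.of_apply, star_sum]
  exact Finset.sum_congr rfl fun j _ => hA.apply _ _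

lemma ptrace1_isHermitian {I J : Type*} [Fintype I] [Fintype J]
    (A : Matrix (I × J) (I × J) ℂ) (hA : A.IsHermitian) : (ptrace1 A).IsHermitian := by
  refine Matrix.ext fun j j' => ?_
  rw [Matrix.conjTranspose_apply, ptrace1, Matrix.of_apply, Matrix.of_apply, star_sum]
  exact Finset.sum_congr rfl fun i _ => hA.apply _ _

lemma ptrace2_trace {I J : Type*} [Fintype I] [Fintype J]
    (A : Matrix (I × J) (I × J) ℂ) : (ptrace2 A).trace = A.trace := by
  rw [Matrix.trace, Matrix.trace, Fintype.sum_prod_type]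
  rfl

lemma ptrace1_trace {I J : Type*} [Fintype I] [Fintype J]
    (A : Matrix (I × J) (I × J) ℂ) : (ptrace1 A).trace = A.trace := by
  rw [Matrix.trace, Matrix.trace, Fintype.sum_prod_type, Finset.sum_comm]
  rfl

lemma vnEntropy_kronecker {I J : Type*} [Fintype I] [Fintype J] [DecidableEq I] [DecidableEq J]
    (θ : Matrix I I ℂ) (κ : Matrix J J ℂ) (hθ : θ.IsHermitian) (hκ : κ.IsHermitian)
    (tθ : θ.trace = 1) (tκ : κ.trace = 1) :
    vnEntropy (θ ⊗ₖ κ) = vnEntropy θ + vnEntropy κ := by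
  have hherm : (θ ⊗ₖ κ).IsHermitian := by
    have h : (θ ⊗ₖ κ)ᴴ = θᴴ ⊗ₖ κᴴ := by
      refine Matrix.ext fun p p' => ?_
      simp [Matrix.conjTranspose_apply, Matrix.kroneckerMap_apply, star_mul']
    rw [Matrix.IsHermitian, h, hθ.eq, hκ.eq]
  set Uθ : Matrix I I ℂ := (hθ.eigenvectorUnitary : Matrix I I ℂ) with hUθ
  set Uκ : Matrix J J ℂ := (hκ.eigenvectorUnitary : Matrix J J ℂ) with hUκ
  have hθ1 : Uθ * star Uθ = 1 := (Matrix.mem_unitaryGroup_iff).mp hθ.eigenvectorUnitary.2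
  have hκ1 : Uκ * star Uκ = 1 := (Matrix.mem_unitaryGroup_iff).mp hκ.eigenvectorUnitary.2
  set d : I × J → ℝ := fun p => hθ.eigenvalues p.1 * hκ.eigenvalues p.2 with hd
  have hUV : (Uθ ⊗ₖ Uκ) * ((star Uθ) ⊗ₖ (star Uκ)) = 1 := by
    rw [← Matrix.mul_kronecker_mul, hθ1, hκ1, Matrix.one_kronecker_one]
  have hdec : θ ⊗ₖ κ = (Matrix.reindex (Equiv.refl (I × J)) (Equiv.refl (I × J)))
      ((Uθ ⊗ₖ Uκ) * Matrix.diagonal (fun p => ((d p : ℝ) : ℂ)) * ((star Uθ) ⊗ₖ (star Uκ))) := by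
    rw [Matrix.reindex_apply, Equiv.refl_symm, Equiv.coe_refl, Matrix.submatrix_id_id]
    have hDD : Matrix.diagonal (fun p : I × J => ((d p : ℝ) : ℂ))
        = (Matrix.diagonal (fun i => ((hθ.eigenvalues i : ℝ) : ℂ)))
          ⊗ₖ (Matrix.diagonal (fun j => ((hκ.eigenvalues j : ℝ) : ℂ))) := by
      rw [Matrix.diagonal_kronecker_diagonal]
      refine congrArg Matrix.diagonal (funext fun p => ?_)
      rw [hd]
      push_cast
      rfl
    rw [hDD, ← Matrix.mul_kronecker_mul, ← Matrix.mul_kronecker_mul]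
    conv_lhs => rw [hθ.spectral_theorem, hκ.spectral_theorem]
    rfl
  rw [vnEntropy_herm _ hherm,
    sum_f_eigenvalues _ hherm (Equiv.refl (I × J)) _ _ hUV d hdec entPhi,
    vnEntropy_herm _ hθ, vnEntropy_herm _ hκ, Fintype.sum_prod_type]
  have : ∀ i j, entPhi (d (i, j)) = hθ.eigenvalues i * entPhi (hκ.eigenvalues j)
      + hκ.eigenvalues j * entPhi (hθ.eigenvalues i) := fun i j => entPhi_mul _ _
  calc ∑ i, ∑ j, entPhi (d (i, j))
      = ∑ i, (hθ.eigenvalues i * ∑ j, entPhi (hκ.eigenvalues j)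
          + (∑ j, hκ.eigenvalues j) * entPhi (hθ.eigenvalues i)) := by
        refine Finset.sum_congr rfl fun i _ => ?_
        rw [Finset.sum_congr rfl fun j _ => this i j, Finset.sum_add_distrib, ← Finset.mul_sum,
          ← Finset.sum_mul]
    _ = ∑ i, entPhi (hθ.eigenvalues i) + ∑ j, entPhi (hκ.eigenvalues j) := by
        rw [sum_eigenvalues_eq_one κ hκ tκ, Finset.sum_add_distrib, ← Finset.sum_mul,
          sum_eigenvalues_eq_one θ hθ tθ, one_mul]
        simp [add_comm]


end AuxLemmas

/-- CMI with a classical conditioning system is the average of mutual informations, and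
it vanishes when each conditional state is a product state. -/
theorem cmi_classical_conditioning {K L : Type*}
    [Fintype K] [Fintype L] [DecidableEq K] [DecidableEq L]
    {n : ℕ} (hn : 1 ≤ n)
    (q : Fin n → ℝ) (hq : IsProbDist q)
    (ρ : Fin n → Matrix (K × L) (K × L) ℂ)
    (hρ : ∀ lam, (ρ lam).PosSemidef ∧ (ρ lam).trace = 1)
    (ρKLE : Matrix (K × L × Fin n) (K × L × Fin n) ℂ)
    (hρKLE : ρKLE = Matrix.of fun p p' =>
      if p.2.2 = p'.2.2 then (q p.2.2 : ℂ) * ρ p.2.2 (p.1, p.2.1) (p'.1, p'.2.1) else 0) :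
    (CMI ρKLE = ∑ lam ∈ Finset.univ.filter (fun lam => 0 < q lam), q lam * MI (ρ lam)) ∧
    ((∀ lam, ∃ (θ : Matrix K K ℂ) (κ : Matrix L L ℂ),
        θ.PosSemidef ∧ θ.trace = 1 ∧ κ.PosSemidef ∧ κ.trace = 1 ∧ ρ lam = θ ⊗ₖ κ) →
      CMI ρKLE = 0) := by
  have hherm : ∀ lam, (ρ lam).IsHermitian := fun lam => (hρ lam).1.1
  have htr : ∀ lam, (ρ lam).trace = 1 := fun lam => (hρ lam).2
  have hKLE : ρKLE = (Matrix.reindex (Equiv.prodAssoc K L (Fin n)) (Equiv.prodAssoc K L (Fin n)))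
      (Matrix.blockDiagonal fun lam => (q lam : ℂ) • ρ lam) := by
    rw [hρKLE]
    refine Matrix.ext fun p p' => ?_
    obtain ⟨k, l, e⟩ := p
    obtain ⟨k', l', e'⟩ := p'
    simp [Matrix.reindex_apply, Matrix.submatrix_apply, Matrix.blockDiagonal_apply,
      Equiv.prodAssoc, Matrix.smul_apply, smul_eq_mul]
  have hEKLE : vnEntropy ρKLE = ∑ lam, (q lam * vnEntropy (ρ lam) + entPhi (q lam)) :=
    vnEntropy_reindex_blockDiagonal _ _ q ρ hherm htr hKLE
  have hKM : margKM ρKLE = Matrix.blockDiagonal fun lam => (q lam : ℂ) • ptrace2 (ρ lam) := by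
    refine Matrix.ext fun p p' => ?_
    obtain ⟨k, e⟩ := p
    obtain ⟨k', e'⟩ := p'
    by_cases h : e = e'
    · subst h
      simp [margKM, hρKLE, Matrix.blockDiagonal_apply, ptrace2, Finset.mul_sum,
        Matrix.smul_apply, smul_eq_mul]
    · simp [margKM, hρKLE, Matrix.blockDiagonal_apply, h]
  have hLM : margLM ρKLE = Matrix.blockDiagonal fun lam => (q lam : ℂ) • ptrace1 (ρ lam) := by
    refine Matrix.ext fun p p' => ?_
    obtain ⟨l, e⟩ := p
    obtain ⟨l', e'⟩ := p'
    by_cases h : e = e'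
    · subst h
      simp [margLM, hρKLE, Matrix.blockDiagonal_apply, ptrace1, Finset.mul_sum,
        Matrix.smul_apply, smul_eq_mul]
    · simp [margLM, hρKLE, Matrix.blockDiagonal_apply, h]
  have hEKM : vnEntropy (margKM ρKLE)
      = ∑ lam, (q lam * vnEntropy (ptrace2 (ρ lam)) + entPhi (q lam)) := by
    refine vnEntropy_reindex_blockDiagonal _ (Equiv.refl (K × Fin n)) q
      (fun lam => ptrace2 (ρ lam)) (fun lam => ptrace2_isHermitian _ (hherm lam))
      (fun lam => by rw [ptrace2_trace]; exact htr lam) ?_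
    rw [Matrix.reindex_apply, Equiv.refl_symm, Equiv.coe_refl, Matrix.submatrix_id_id]
    exact hKM
  have hELM : vnEntropy (margLM ρKLE)
      = ∑ lam, (q lam * vnEntropy (ptrace1 (ρ lam)) + entPhi (q lam)) := by
    refine vnEntropy_reindex_blockDiagonal _ (Equiv.refl (L × Fin n)) q
      (fun lam => ptrace1 (ρ lam)) (fun lam => ptrace1_isHermitian _ (hherm lam))
      (fun lam => by rw [ptrace1_trace]; exact htr lam) ?_
    rw [Matrix.reindex_apply, Equiv.refl_symm, Equiv.coe_refl, Matrix.submatrix_id_id]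
    exact hLM
  have hM : margM ρKLE = Matrix.diagonal fun e => ((q e : ℝ) : ℂ) := by
    refine Matrix.ext fun e e' => ?_
    by_cases h : e = e'
    · subst h
      rw [Matrix.diagonal_apply_eq]
      have : margM ρKLE e e = (q e : ℂ) * (ρ e).trace := by
        simp only [margM, hρKLE, Matrix.of_apply, if_pos rfl]
        rw [Matrix.trace, Fintype.sum_prod_type, Finset.mul_sum]
        refine Finset.sum_congr rfl fun k _ => ?_
        rw [Finset.mul_sum]
        rfl
      rw [this, htr e, mul_one]
    · rw [Matrix.diagonal_apply_ne _ h]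
      simp [margM, hρKLE, h]
  have hEM : vnEntropy (margM ρKLE) = ∑ lam, entPhi (q lam) := by
    rw [hM]; exact vnEntropy_diagonal_real q
  have hmain : CMI ρKLE = ∑ lam, q lam * MI (ρ lam) := by
    rw [CMI, hEKM, hELM, hEKLE, hEM, ← Finset.sum_add_distrib, ← Finset.sum_sub_distrib,
      ← Finset.sum_sub_distrib]
    refine Finset.sum_congr rfl fun lam _ => ?_
    rw [MI]
    ring
  constructor
  · rw [hmain]
    refine (Finset.sum_filter_of_ne fun lam _ h => ?_).symm
    have hne : q lam ≠ 0 := left_ne_zero_of_mul h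
    exact lt_of_le_of_ne (hq.1 lam) (Ne.symm hne)
  · intro hprod
    rw [hmain]
    refine Finset.sum_eq_zero fun lam _ => ?_
    obtain ⟨θ, κ, hθp, hθt, hκp, hκt, heq⟩ := hprod lam
    have h2 : ptrace2 (θ ⊗ₖ κ) = θ := by
      refine Matrix.ext fun i i' => ?_
      simp only [ptrace2, Matrix.of_apply, Matrix.kroneckerMap_apply]
      rw [← Finset.mul_sum]
      have : ∑ j, κ j j = κ.trace := rfl
      rw [this, hκt, mul_one]
    have h1 : ptrace1 (θ ⊗ₖ κ) = κ := by
      refine Matrix.ext fun j j' => ?_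
      simp only [ptrace1, Matrix.of_apply, Matrix.kroneckerMap_apply]
      rw [← Finset.sum_mul]
      have : ∑ i, θ i i = θ.trace := rfl
      rw [this, hθt, one_mul]
    have hMI : MI (ρ lam) = 0 := by
      rw [MI, heq, h2, h1, vnEntropy_kronecker θ κ hθp.1 hκp.1 hθt hκt]
      ring
    rw [hMI, mul_zero]
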